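/- Let q² be a primitive l-th root of unity (l>1), μ = (μ₁,μ₂) ∈ (K*)², and α ∈ K*. Define a right action of A(α,0,0) on the K-space M₆(μ) with basis m_0,…,m_{l−1} by m_k·x = μ₁ m_{k+1 mod l}, m_k·y = μ₁⁻¹ ((q^{2k}μ₂ − α)/(q²−1)) m_{k−1 mod l}, m_k·z = 0. These operators satisfy the defining relations of A(α,0,0): XY = q²YX + α·id, XZ = q⁻²ZX, YZ = q²ZY, where X, Y, Z denote the linear operators of x, y, z respectively. -/

import Mathlib

noncomputable section

/-- The matrix (row `k` = expansion of `m_k·x`) of the action of `x` on `M₆(μ)`: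
`m_k·x = μ₁ m_{k+1 mod l}`. -/
def M6X {K : Type} [Field K] (μ₁ : K) (l : ℕ) [NeZero l] : Matrix (Fin l) (Fin l) K :=
  Matrix.of fun k j => if j = k + 1 then μ₁ else 0

/-- The matrix of the action of `y` on `M₆(μ)`:
`m_k·y = μ₁⁻¹ ((q^{2k}μ₂ - α)/(q²-1)) m_{k-1 mod l}`. -/
def M6Y {K : Type} [Field K] (q α μ₁ μ₂ : K) (l : ℕ) [NeZero l] : Matrix (Fin l) (Fin l) K :=
  Matrix.of fun k j =>
    if j = k - 1 then μ₁⁻¹ * ((q ^ (2 * (k : ℕ)) * μ₂ - α) / (q ^ 2 - 1)) else 0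

/-- The matrix of the action of `z` on `M₆(μ)`: `m_k·z = 0`. -/
def M6Z {K : Type} [Field K] (l : ℕ) : Matrix (Fin l) (Fin l) K := 0

/-- The prescribed action on `M₆(μ)` satisfies the defining relations of `A(α,0,0)`:
`XY = q²YX + α·1`, `XZ = q⁻²ZX`, `YZ = q²ZY`, where `X`, `Y`, `Z` are the matrices of the
operators of `x`, `y`, `z` (rows indexed by the basis `m_0, …, m_{l-1}`). -/
theorem stmt16 {K : Type} [Field K] (q : K) (l : ℕ) [NeZero l] (hl : 1 < l)
    (hq : IsPrimitiveRoot (q ^ 2) l) (α μ₁ μ₂ : K) (hα : α ≠ 0) (hμ₁ : μ₁ ≠ 0)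
    (hμ₂ : μ₂ ≠ 0) :
    M6X μ₁ l * M6Y q α μ₁ μ₂ l = q ^ 2 • (M6Y q α μ₁ μ₂ l * M6X μ₁ l) + α • 1 ∧
    M6X μ₁ l * M6Z l = q⁻¹ ^ 2 • (M6Z l * M6X μ₁ l) ∧
    M6Y q α μ₁ μ₂ l * M6Z l = q ^ 2 • (M6Z l * M6Y q α μ₁ μ₂ l) := by
  have hq1 : (q ^ 2 - 1) ≠ 0 := sub_ne_zero.mpr (hq.ne_one hl)
  refine ⟨?_, by simp [M6Z], by simp [M6Z]⟩
  ext k j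
  simp only [M6X, M6Y, Matrix.mul_apply, Matrix.of_apply, Matrix.add_apply,
    Matrix.smul_apply, Matrix.one_apply, smul_eq_mul, ite_mul, mul_ite, zero_mul, mul_zero]
  rw [Finset.sum_eq_single (k + 1) (fun b _ hb => by simp [hb]) (by simp),
    Finset.sum_eq_single (k - 1) (fun b _ hb => by simp [hb]) (by simp)]
  simp only [if_pos rfl, add_sub_cancel_right, sub_add_cancel]
  by_cases h : j = k
  · subst h
    simp only [if_pos rfl, eq_comm, if_pos rfl]
    have hexp : q ^ (2 * ((j + 1 : Fin l) : ℕ)) = q ^ (2 * ((j : ℕ) + 1)) := by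
      have h1 : ((j + 1 : Fin l) : ℕ) = ((j : ℕ) + 1) % l := by
        simp [Fin.add_def]
      rw [h1, pow_mul, pow_mul, ← pow_eq_pow_mod _ hq.pow_eq_one]
    rw [hexp]
    have : q ^ (2 * ((j : ℕ) + 1)) = q ^ (2 * (j : ℕ)) * q ^ 2 := by ring
    rw [this]
    simp only [↓reduceIte]
    field_simp
    ring
  · rw [if_neg h, if_neg h, if_neg (fun hh => h hh.symm)]
    ring
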